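/- Let G be a finite group with a unitary representation U on ℂ^d and twirling operation 𝒢, and let ψ be a density matrix on ℂ^d. Let M ≥ 1 and for each m ∈ Fin M let E_m be a positive trace-preserving linear map on d×d matrices satisfying E_m(𝒢(Y)) = 𝒢(Y) for every d×d matrix Y. Let ρ̄ = (1/M) Σ_m E_m(ψ). Then (1/M) Σ_{m} D(E_m(ψ) ‖ ρ̄) ≤ D(ψ ‖ 𝒢(ψ)), where D is the quantum relative entropy. -/

import Mathlib

open scoped BigOperators Kronecker ComplexOrder
open Matrix

/-- von Neumann entropy of a matrix (via eigenvalues when Hermitian, else 0). -/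
noncomputable def vnEntropy {ι : Type*} [Fintype ι] [DecidableEq ι]
    (ρ : Matrix ι ι ℂ) : ℝ :=
  if h : ρ.IsHermitian then -∑ i, h.eigenvalues i * Real.log (h.eigenvalues i) else 0

/-- Twirling operation induced by a family of matrices indexed by a finite group. -/
noncomputable def twirl {G ι : Type*} [Fintype G] [Fintype ι]
    (U : G → Matrix ι ι ℂ) (X : Matrix ι ι ℂ) : Matrix ι ι ℂ :=
  (Fintype.card G : ℂ)⁻¹ • ∑ g, U g * X * (U g)ᴴ

/-- Apply a real function spectrally to a Hermitian matrix (0 otherwise). -/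
noncomputable def matFun {ι : Type*} [Fintype ι] [DecidableEq ι]
    (f : ℝ → ℝ) (ρ : Matrix ι ι ℂ) : Matrix ι ι ℂ :=
  if h : ρ.IsHermitian then
    (h.eigenvectorUnitary : Matrix ι ι ℂ) *
      Matrix.diagonal (fun i => (f (h.eigenvalues i) : ℂ)) *
      (star (h.eigenvectorUnitary : Matrix ι ι ℂ))
  else 0

/-- Spectral power `ρ ^ t` with the convention `0 ^ t = 0`. -/
noncomputable def matPow {ι : Type*} [Fintype ι] [DecidableEq ι]
    (ρ : Matrix ι ι ℂ) (t : ℝ) : Matrix ι ι ℂ :=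
  matFun (fun x => if x = 0 then 0 else x ^ t) ρ

/-- Spectral logarithm with the convention `log 0 = 0`. -/
noncomputable def matLog {ι : Type*} [Fintype ι] [DecidableEq ι]
    (ρ : Matrix ι ι ℂ) : Matrix ι ι ℂ :=
  matFun Real.log ρ

/-- Absolute value `|M| = √(MᴴM)`. -/
noncomputable def matAbs {ι : Type*} [Fintype ι] [DecidableEq ι]
    (M : Matrix ι ι ℂ) : Matrix ι ι ℂ :=
  matPow (Mᴴ * M) (1/2 : ℝ)


/-- Quantum relative entropy `D(ρ‖σ) = Re tr[ρ(log ρ − log σ)]`, with the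
spectral logarithm and convention `log 0 = 0`. -/
noncomputable def relEnt {ι : Type*} [Fintype ι] [DecidableEq ι]
    (ρ σ : Matrix ι ι ℂ) : ℝ :=
  ((ρ * (matLog ρ - matLog σ)).trace).re

set_option linter.unusedSectionVars false
set_option maxHeartbeats 1000000

namespace QHelper
open Matrix
open scoped ComplexOrder

variable {n : Type*} [Fintype n] [DecidableEq n]

lemma star_ofReal_fun (μ : n → ℝ) : star (fun i => ((μ i : ℝ) : ℂ)) = fun i => ((μ i : ℝ) : ℂ) := by
  funext i
  simp [Complex.conj_ofReal]

lemma herm_of_decomp {A W : Matrix n n ℂ} {μ : n → ℝ}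
    (hAW : A = W * diagonal (fun i => (μ i : ℂ)) * Wᴴ) : A.IsHermitian := by
  rw [hAW]
  apply isHermitian_mul_mul_conjTranspose
  exact isHermitian_diagonal_of_self_adjoint _ (star_ofReal_fun μ)

lemma spec_eq {A W : Matrix n n ℂ} {μ : n → ℝ} (f : ℝ → ℝ)
    (hW1 : W * Wᴴ = 1) (hW2 : Wᴴ * W = 1)
    (hAW : A = W * diagonal (fun i => (μ i : ℂ)) * Wᴴ) :
    matFun f A = W * diagonal (fun i => (f (μ i) : ℂ)) * Wᴴ := by
  have hA : A.IsHermitian := herm_of_decomp hAW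
  set V : Matrix n n ℂ := (hA.eigenvectorUnitary : Matrix n n ℂ) with hVdef
  have hV2 : Vᴴ * V = 1 := by
    rw [← Matrix.star_eq_conjTranspose]
    exact (Unitary.mem_iff.mp hA.eigenvectorUnitary.2).1
  have hV1 : V * Vᴴ = 1 := by
    rw [← Matrix.star_eq_conjTranspose]
    exact (Unitary.mem_iff.mp hA.eigenvectorUnitary.2).2
  set lam : n → ℝ := hA.eigenvalues with hlam
  have hspec : A = V * diagonal (fun i => ((lam i : ℝ) : ℂ)) * Vᴴ := by
    rw [← Matrix.star_eq_conjTranspose]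
    simpa [Function.comp_def] using hA.spectral_theorem
  set T : Matrix n n ℂ := Vᴴ * W with hT
  have key : diagonal (fun i => ((lam i : ℝ) : ℂ)) * T
      = T * diagonal (fun i => ((μ i : ℝ) : ℂ)) := by
    calc diagonal (fun i => ((lam i : ℝ) : ℂ)) * T
        = (Vᴴ * V) * diagonal (fun i => ((lam i : ℝ) : ℂ)) * (Vᴴ * W) := by
          rw [hV2, Matrix.one_mul, hT]
      _ = Vᴴ * (V * diagonal (fun i => ((lam i : ℝ) : ℂ)) * Vᴴ) * W := by noncomm_ring
      _ = Vᴴ * A * W := by rw [← hspec]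
      _ = Vᴴ * (W * diagonal (fun i => ((μ i : ℝ) : ℂ)) * Wᴴ) * W := by rw [← hAW]
      _ = (Vᴴ * W) * diagonal (fun i => ((μ i : ℝ) : ℂ)) * (Wᴴ * W) := by noncomm_ring
      _ = T * diagonal (fun i => ((μ i : ℝ) : ℂ)) := by rw [hW2, Matrix.mul_one, hT]
  have key2 : diagonal (fun i => ((f (lam i) : ℝ) : ℂ)) * T
      = T * diagonal (fun i => ((f (μ i) : ℝ) : ℂ)) := by
    ext i j
    rw [diagonal_mul, mul_diagonal]
    have hent : (lam i : ℂ) * T i j = T i j * (μ j : ℂ) := by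
      have h0 := Matrix.ext_iff.mpr key i j
      simpa [diagonal_mul, mul_diagonal] using h0
    by_cases hTij : T i j = 0
    · simp [hTij]
    · have h1 : (lam i : ℂ) = (μ j : ℂ) := by
        rw [mul_comm (T i j) _] at hent
        exact mul_right_cancel₀ hTij hent
      have h2 : lam i = μ j := by exact_mod_cast h1
      rw [h2, mul_comm]
  have hmf : matFun f A = V * diagonal (fun i => ((f (lam i) : ℝ) : ℂ)) * Vᴴ := by
    rw [matFun, dif_pos hA, ← Matrix.star_eq_conjTranspose]
  rw [hmf]
  calc V * diagonal (fun i => ((f (lam i) : ℝ) : ℂ)) * Vᴴ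
      = V * diagonal (fun i => ((f (lam i) : ℝ) : ℂ)) * (Vᴴ * (W * Wᴴ)) := by
        rw [hW1, Matrix.mul_one]
    _ = V * (diagonal (fun i => ((f (lam i) : ℝ) : ℂ)) * (Vᴴ * W)) * Wᴴ := by noncomm_ring
    _ = V * (diagonal (fun i => ((f (lam i) : ℝ) : ℂ)) * T) * Wᴴ := by rw [hT]
    _ = V * (T * diagonal (fun i => ((f (μ i) : ℝ) : ℂ))) * Wᴴ := by rw [key2]
    _ = V * ((Vᴴ * W) * diagonal (fun i => ((f (μ i) : ℝ) : ℂ))) * Wᴴ := by rw [hT]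
    _ = (V * Vᴴ) * (W * diagonal (fun i => ((f (μ i) : ℝ) : ℂ)) * Wᴴ) := by noncomm_ring
    _ = W * diagonal (fun i => ((f (μ i) : ℝ) : ℂ)) * Wᴴ := by rw [hV1, Matrix.one_mul]

end QHelper
namespace QHelper
open Matrix Finset
open scoped ComplexOrder BigOperators

variable {n : Type*} [Fintype n] [DecidableEq n]

noncomputable def eVec {A : Matrix n n ℂ} (hA : A.IsHermitian) : Matrix n n ℂ :=
  (hA.eigenvectorUnitary : Matrix n n ℂ)

lemma eVec_conjT_mul {A : Matrix n n ℂ} (hA : A.IsHermitian) : (eVec hA)ᴴ * eVec hA = 1 := by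
  rw [← Matrix.star_eq_conjTranspose]
  exact (Unitary.mem_iff.mp hA.eigenvectorUnitary.2).1

lemma eVec_mul_conjT {A : Matrix n n ℂ} (hA : A.IsHermitian) : eVec hA * (eVec hA)ᴴ = 1 := by
  rw [← Matrix.star_eq_conjTranspose]
  exact (Unitary.mem_iff.mp hA.eigenvectorUnitary.2).2

lemma spec_decomp {A : Matrix n n ℂ} (hA : A.IsHermitian) :
    A = eVec hA * diagonal (fun i => ((hA.eigenvalues i : ℝ) : ℂ)) * (eVec hA)ᴴ := by
  rw [← Matrix.star_eq_conjTranspose]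
  simpa [eVec, Function.comp_def] using hA.spectral_theorem

lemma matFun_eq {A : Matrix n n ℂ} (hA : A.IsHermitian) (f : ℝ → ℝ) :
    matFun f A = eVec hA * diagonal (fun i => ((f (hA.eigenvalues i) : ℝ) : ℂ)) * (eVec hA)ᴴ :=
  spec_eq f (eVec_mul_conjT hA) (eVec_conjT_mul hA) (spec_decomp hA)

lemma matFun_herm {A : Matrix n n ℂ} (hA : A.IsHermitian) (f : ℝ → ℝ) :
    (matFun f A).IsHermitian :=
  herm_of_decomp (matFun_eq hA f)

lemma matFun_psd {A : Matrix n n ℂ} (hA : A.IsHermitian) {f : ℝ → ℝ} (hf : ∀ x, 0 ≤ f x) :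
    (matFun f A).PosSemidef := by
  rw [matFun_eq hA f]
  apply PosSemidef.mul_mul_conjTranspose_same
  apply PosSemidef.diagonal
  intro i
  simp only [Pi.zero_apply]
  exact_mod_cast hf _

lemma matFun_mul_matFun {A : Matrix n n ℂ} (hA : A.IsHermitian) (f g : ℝ → ℝ) :
    matFun f A * matFun g A = matFun (fun x => f x * g x) A := by
  rw [matFun_eq hA f, matFun_eq hA g, matFun_eq hA (fun x => f x * g x)]
  calc eVec hA * diagonal (fun i => ((f (hA.eigenvalues i) : ℝ) : ℂ)) * (eVec hA)ᴴ *
        (eVec hA * diagonal (fun i => ((g (hA.eigenvalues i) : ℝ) : ℂ)) * (eVec hA)ᴴ)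
      = eVec hA * (diagonal (fun i => ((f (hA.eigenvalues i) : ℝ) : ℂ)) * ((eVec hA)ᴴ * eVec hA) *
          diagonal (fun i => ((g (hA.eigenvalues i) : ℝ) : ℂ))) * (eVec hA)ᴴ := by noncomm_ring
    _ = eVec hA * (diagonal (fun i => ((f (hA.eigenvalues i) : ℝ) : ℂ)) *
          diagonal (fun i => ((g (hA.eigenvalues i) : ℝ) : ℂ))) * (eVec hA)ᴴ := by
        rw [eVec_conjT_mul, Matrix.mul_one]
    _ = eVec hA * diagonal (fun i => ((f (hA.eigenvalues i) * g (hA.eigenvalues i) : ℝ) : ℂ)) *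
          (eVec hA)ᴴ := by
        rw [diagonal_mul_diagonal]
        congr 2
        funext i
        push_cast
        ring

lemma matFun_id {A : Matrix n n ℂ} (hA : A.IsHermitian) {f : ℝ → ℝ} (hf : ∀ x, f x = x) :
    matFun f A = A := by
  rw [matFun_eq hA f]
  simp only [hf]
  exact (spec_decomp hA).symm

lemma trace_conj_diagonal {V : Matrix n n ℂ} (hV : Vᴴ * V = 1) (d : n → ℂ) :
    (V * diagonal d * Vᴴ).trace = ∑ i, d i := by
  rw [trace_mul_cycle, hV, Matrix.one_mul, trace_diagonal]

lemma trace_mul_matFun_self {A : Matrix n n ℂ} (hA : A.IsHermitian) (f : ℝ → ℝ) :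
    (A * matFun f A).trace = ∑ i, ((hA.eigenvalues i * f (hA.eigenvalues i) : ℝ) : ℂ) := by
  have h1 : A * matFun f A = matFun (fun x => x * f x) A := by
    rw [← matFun_mul_matFun hA (fun x => x) f, matFun_id hA (fun x => rfl)]
  rw [h1, matFun_eq hA _, trace_conj_diagonal (eVec_conjT_mul hA)]


end QHelper
namespace QHelper
open Matrix Finset
open scoped ComplexOrder BigOperators

variable {n : Type*} [Fintype n] [DecidableEq n]

lemma matFun_one {A : Matrix n n ℂ} (hA : A.IsHermitian) {f : ℝ → ℝ} (hf : ∀ x, f x = 1) :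
    matFun f A = 1 := by
  rw [matFun_eq hA f]
  simp only [hf]
  simpa [Matrix.diagonal_one] using eVec_mul_conjT hA

lemma matFun_eq_sum_proj {A : Matrix n n ℂ} (hA : A.IsHermitian) (f : ℝ → ℝ) :
    matFun f A = ∑ c ∈ Finset.image hA.eigenvalues Finset.univ,
      (f c : ℂ) • matFun (fun x => if x = c then 1 else 0) A := by
  have hc : ∀ c : ℝ, (f c : ℂ) • matFun (fun x => if x = c then 1 else 0) A
      = eVec hA * diagonal (fun i => if hA.eigenvalues i = c then (f c : ℂ) else 0)
          * (eVec hA)ᴴ := by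
    intro c
    rw [matFun_eq hA _]
    calc (f c : ℂ) • (eVec hA *
          diagonal (fun i => (((if hA.eigenvalues i = c then 1 else 0 : ℝ)) : ℂ)) * (eVec hA)ᴴ)
        = eVec hA * ((f c : ℂ) •
          diagonal (fun i => (((if hA.eigenvalues i = c then 1 else 0 : ℝ)) : ℂ))) * (eVec hA)ᴴ := by
          rw [Matrix.mul_smul, Matrix.smul_mul]
      _ = eVec hA * diagonal (fun i => if hA.eigenvalues i = c then (f c : ℂ) else 0)
            * (eVec hA)ᴴ := by
          congr 1
          congr 1
          ext i j
          rcases eq_or_ne i j with rfl | hij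
          · by_cases h : hA.eigenvalues i = c <;>
              simp [Matrix.smul_apply, diagonal_apply_eq, h]
          · simp [Matrix.smul_apply, diagonal_apply_ne _ hij]
  rw [matFun_eq hA f, Finset.sum_congr rfl fun c _ => hc c, ← Finset.sum_mul, ← Finset.mul_sum]
  congr 2
  ext i j
  rcases eq_or_ne i j with rfl | hij
  · rw [Matrix.sum_apply]
    simp only [diagonal_apply_eq]
    rw [Finset.sum_ite_eq (Finset.image hA.eigenvalues Finset.univ) (hA.eigenvalues i)
      (fun c => (f c : ℂ))]
    simp [Finset.mem_image_of_mem _ (Finset.mem_univ i)]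
  · rw [Matrix.sum_apply]
    simp [diagonal_apply_ne _ hij]

lemma trace_mul_vecMulVec (B : Matrix n n ℂ) (x : n → ℂ) :
    (B * vecMulVec x (star x)).trace = star x ⬝ᵥ B *ᵥ x := by
  simp only [Matrix.trace, Matrix.diag, Matrix.mul_apply, vecMulVec_apply, dotProduct,
    Matrix.mulVec, Pi.star_apply, Finset.mul_sum]
  exact Finset.sum_congr rfl fun i _ => Finset.sum_congr rfl fun k _ => by ring

lemma psd_vecMulVec (x : n → ℂ) : (vecMulVec x (star x)).PosSemidef := by
  refine .of_dotProduct_mulVec_nonneg ?_ ?_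
  · ext i j
    simp [conjTranspose_apply, vecMulVec_apply, mul_comm]
  · intro y
    have h1 : (vecMulVec x (star x)) *ᵥ y = (star x ⬝ᵥ y) • x := by
      funext i
      simp only [Matrix.mulVec, vecMulVec_apply, dotProduct, Pi.smul_apply, smul_eq_mul,
        Pi.star_apply]
      rw [Finset.sum_mul]
      exact Finset.sum_congr rfl fun j _ => by ring
    rw [h1, dotProduct_smul]
    have hconj : star y ⬝ᵥ x = (starRingEnd ℂ) (star x ⬝ᵥ y) := by
      simp [dotProduct, map_sum, mul_comm]
    rw [smul_eq_mul, hconj, Complex.mul_conj]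
    exact Complex.zero_le_real.mpr (Complex.normSq_nonneg _)

lemma psd_trace_nonneg {B : Matrix n n ℂ} (hB : B.PosSemidef) : 0 ≤ B.trace := by
  have h : ∀ i, 0 ≤ B i i := by
    intro i
    have := hB.dotProduct_mulVec_nonneg (Pi.single i 1)
    simpa [dotProduct, Matrix.mulVec, Pi.single_apply] using this
  exact Finset.sum_nonneg fun i _ => h i

lemma trace_eq_sum_eigen {A : Matrix n n ℂ} (hA : A.IsHermitian) :
    A.trace = ∑ i, ((hA.eigenvalues i : ℝ) : ℂ) := by
  conv_lhs => rw [spec_decomp hA]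
  rw [trace_conj_diagonal (eVec_conjT_mul hA)]

lemma psd_eq_zero_of_trace_zero {B : Matrix n n ℂ} (hB : B.PosSemidef) (h : B.trace = 0) :
    B = 0 := by
  have h2 : ∑ i, hB.1.eigenvalues i = 0 := by
    have := trace_eq_sum_eigen hB.1
    rw [h] at this
    exact_mod_cast (by push_cast at this ⊢; exact this.symm : ((∑ i, hB.1.eigenvalues i : ℝ) : ℂ) = 0)
  have h3 : ∀ i, hB.1.eigenvalues i = 0 := by
    intro i
    have := (Finset.sum_eq_zero_iff_of_nonneg (fun i _ => hB.eigenvalues_nonneg i)).mp h2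
    exact this i (Finset.mem_univ i)
  have h4 := spec_decomp hB.1
  rw [h4]
  have : (diagonal fun i => ((hB.1.eigenvalues i : ℝ) : ℂ)) = 0 := by
    ext i j
    simp [diagonal_apply, h3]
  rw [this, Matrix.mul_zero, Matrix.zero_mul]

noncomputable def _root_.Matrix.PosSemidef.sqrt {A : Matrix n n ℂ} (hA : A.PosSemidef) :
    Matrix n n ℂ :=
  matFun Real.sqrt A

lemma _root_.Matrix.PosSemidef.posSemidef_sqrt {A : Matrix n n ℂ} (hA : A.PosSemidef) :
    hA.sqrt.PosSemidef :=
  matFun_psd hA.1 (fun x => Real.sqrt_nonneg x)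

lemma _root_.Matrix.PosSemidef.sq_sqrt {A : Matrix n n ℂ} (hA : A.PosSemidef) :
    hA.sqrt ^ 2 = A := by
  rw [pow_two, Matrix.PosSemidef.sqrt, matFun_mul_matFun hA.1, matFun_eq hA.1]
  conv_rhs => rw [spec_decomp hA.1]
  congr 3
  funext i
  rw [Real.mul_self_sqrt (hA.eigenvalues_nonneg i)]

lemma trace_mul_psd_nonneg {A B : Matrix n n ℂ} (hA : A.PosSemidef) (hB : B.PosSemidef) :
    0 ≤ (A * B).trace := by
  classical
  have hS2 : hA.sqrt * hA.sqrt = A := by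
    have := hA.sq_sqrt
    rwa [pow_two] at this
  have hherm : hA.sqrt.conjTranspose = hA.sqrt := hA.posSemidef_sqrt.1
  have h1 : (A * B).trace = (hA.sqrt * B * hA.sqrtᴴ).trace := by
    rw [hherm]
    calc (A * B).trace = (hA.sqrt * (hA.sqrt * B)).trace := by rw [← Matrix.mul_assoc, hS2]
      _ = ((hA.sqrt * B) * hA.sqrt).trace := trace_mul_comm _ _
      _ = (hA.sqrt * B * hA.sqrt).trace := rfl
  rw [h1]
  exact psd_trace_nonneg (hB.mul_mul_conjTranspose_same hA.sqrt)

lemma mul_proj_eq_zero {B P : Matrix n n ℂ} (hB : B.PosSemidef)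
    (hP : Pᴴ = P) (hPP : P * P = P) (htr : (B * P).trace = 0) : B * P = 0 := by
  have hPBP : (Pᴴ * B * P).PosSemidef := hB.conjTranspose_mul_mul_same P
  have htr2 : (Pᴴ * B * P).trace = 0 := by
    rw [hP]
    calc (P * B * P).trace = (P * (B * P)).trace := by rw [Matrix.mul_assoc]
      _ = ((B * P) * P).trace := trace_mul_comm _ _
      _ = (B * (P * P)).trace := by rw [Matrix.mul_assoc]
      _ = (B * P).trace := by rw [hPP]
      _ = 0 := htr
  have hz : Pᴴ * B * P = 0 := psd_eq_zero_of_trace_zero hPBP htr2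
  have hS2 : hB.sqrt * hB.sqrt = B := by
    have := hB.sq_sqrt; rwa [pow_two] at this
  have hherm : hB.sqrtᴴ = hB.sqrt := hB.posSemidef_sqrt.1
  have hz2 : (hB.sqrt * P)ᴴ * (hB.sqrt * P) = 0 := by
    rw [conjTranspose_mul, hherm]
    calc Pᴴ * hB.sqrt * (hB.sqrt * P) = Pᴴ * (hB.sqrt * hB.sqrt) * P := by noncomm_ring
      _ = Pᴴ * B * P := by rw [hS2]
      _ = 0 := hz
  have hz3 : hB.sqrt * P = 0 := by
    exact conjTranspose_mul_self_eq_zero.mp hz2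
  calc B * P = hB.sqrt * (hB.sqrt * P) := by rw [← Matrix.mul_assoc, hS2]
    _ = 0 := by rw [hz3, Matrix.mul_zero]

lemma psd_smul_real {B : Matrix n n ℂ} (hB : B.PosSemidef) {r : ℝ} (hr : 0 ≤ r) :
    ((r : ℂ) • B).PosSemidef := by
  refine .of_dotProduct_mulVec_nonneg ?_ ?_
  · unfold Matrix.IsHermitian
    rw [conjTranspose_smul, hB.1.eq]
    congr 1
    simp [Complex.conj_ofReal]
  · intro x
    rw [smul_mulVec, dotProduct_smul]
    exact mul_nonneg (by exact_mod_cast hr) (hB.dotProduct_mulVec_nonneg x)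

lemma psd_sum {ι : Type*} (s : Finset ι) (f : ι → Matrix n n ℂ)
    (h : ∀ i ∈ s, (f i).PosSemidef) : (∑ i ∈ s, f i).PosSemidef := by
  classical
  induction s using Finset.induction with
  | empty => simpa using Matrix.PosSemidef.zero
  | insert a s hx ih =>
    rw [Finset.sum_insert hx]
    exact ((h _ (Finset.mem_insert_self _ _)).add (ih fun i hi => h i (Finset.mem_insert_of_mem hi)))

end QHelper
namespace QHelper
open Matrix Finset
open scoped ComplexOrder BigOperators

variable {n : Type*} [Fintype n] [DecidableEq n]

lemma klein_num {ι : Type*} [Fintype ι] (lam s : ι → ℝ) (p : ι → ι → ℝ)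
    (hl0 : ∀ i, 0 ≤ lam i) (hs0 : ∀ j, 0 ≤ s j) (hp0 : ∀ i j, 0 ≤ p i j)
    (hrow : ∀ i, ∑ j, p i j = 1) (hcol : ∀ j, ∑ i, p i j = 1)
    (hl1 : ∑ i, lam i = 1) (hs1 : ∑ j, s j = 1)
    (hps : ∀ i j, lam i ≠ 0 → s j = 0 → p i j = 0) :
    ∑ i, ∑ j, lam i * (p i j * Real.log (s j)) ≤ ∑ i, lam i * Real.log (lam i) := by
  classical
  set q : ι → ℝ := fun i => ∑ j, p i j * s j with hq
  have hq0 : ∀ i, 0 ≤ q i := fun i => Finset.sum_nonneg fun j _ => mul_nonneg (hp0 i j) (hs0 j)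
  have hqpos : ∀ i, lam i ≠ 0 → 0 < q i := by
    intro i hli
    rcases (hq0 i).lt_or_eq with h | h
    · exact h
    · exfalso
      have hz : ∀ j ∈ Finset.univ, p i j * s j = 0 :=
        (Finset.sum_eq_zero_iff_of_nonneg
          (fun j _ => mul_nonneg (hp0 i j) (hs0 j))).mp h.symm
      have h0 : ∑ j, p i j = 0 := Finset.sum_eq_zero fun j _ => by
        rcases mul_eq_zero.mp (hz j (Finset.mem_univ j)) with h' | h'
        · exact h'
        · exact hps i j hli h'
      rw [hrow i] at h0; norm_num at h0
  have step1 : ∀ i, lam i ≠ 0 → ∑ j, p i j * Real.log (s j) ≤ Real.log (q i) := by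
    intro i hli
    have hsnz : ∀ j, p i j ≠ 0 → 0 < s j := by
      intro j hpij
      rcases (hs0 j).lt_or_eq with h | h
      · exact h
      · exact absurd (hps i j hli h.symm) hpij
    have h1 : ∑ j ∈ Finset.univ.filter (fun j => p i j ≠ 0), p i j * Real.log (s j)
        = ∑ j, p i j * Real.log (s j) :=
      Finset.sum_filter_of_ne (fun j _ hf h0 => hf (by rw [h0, zero_mul]))
    have h2 : ∑ j ∈ Finset.univ.filter (fun j => p i j ≠ 0), p i j = 1 := by
      rw [← hrow i]
      exact Finset.sum_filter_of_ne (fun j _ hf => hf)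
    have h3 : ∑ j ∈ Finset.univ.filter (fun j => p i j ≠ 0), p i j * s j = q i := by
      rw [hq]
      exact Finset.sum_filter_of_ne (fun j _ hf h0 => hf (by rw [h0, zero_mul]))
    have hjen := (strictConcaveOn_log_Ioi.concaveOn).le_map_sum
      (t := Finset.univ.filter (fun j => p i j ≠ 0)) (w := fun j => p i j) (p := fun j => s j)
      (fun j _ => hp0 i j) h2
      (fun j hj => Set.mem_Ioi.mpr (hsnz j (Finset.mem_filter.mp hj).2))
    simp only [smul_eq_mul] at hjen
    rw [h3] at hjen
    rw [← h1]
    exact hjen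
  have step2 : ∀ i, lam i * Real.log (q i) - lam i * Real.log (lam i) ≤ q i - lam i := by
    intro i
    by_cases hli : lam i = 0
    · rw [hli]; simpa using hq0 i
    · have hlp : 0 < lam i := (hl0 i).lt_of_ne (Ne.symm hli)
      have hqp : 0 < q i := hqpos i hli
      have h4 : Real.log (q i / lam i) ≤ q i / lam i - 1 :=
        Real.log_le_sub_one_of_pos (div_pos hqp hlp)
      rw [Real.log_div (ne_of_gt hqp) hli] at h4
      have h5 := mul_le_mul_of_nonneg_left h4 (le_of_lt hlp)
      calc lam i * Real.log (q i) - lam i * Real.log (lam i)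
          = lam i * (Real.log (q i) - Real.log (lam i)) := by ring
        _ ≤ lam i * (q i / lam i - 1) := h5
        _ = q i - lam i := by field_simp
  have hqsum : ∑ i, q i = 1 := by
    calc ∑ i, ∑ j, p i j * s j = ∑ j, ∑ i, p i j * s j := Finset.sum_comm
      _ = ∑ j, (∑ i, p i j) * s j := by
          exact Finset.sum_congr rfl fun j _ => (Finset.sum_mul _ _ _).symm
      _ = ∑ j, s j := Finset.sum_congr rfl fun j _ => by rw [hcol j, one_mul]
      _ = 1 := hs1
  calc ∑ i, ∑ j, lam i * (p i j * Real.log (s j))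
      = ∑ i, lam i * (∑ j, p i j * Real.log (s j)) := by
        exact Finset.sum_congr rfl fun i _ => (Finset.mul_sum _ _ _).symm
    _ ≤ ∑ i, lam i * Real.log (q i) := by
        apply Finset.sum_le_sum
        intro i _
        by_cases hli : lam i = 0
        · rw [hli]; simp
        · exact mul_le_mul_of_nonneg_left (step1 i hli) (hl0 i)
    _ ≤ ∑ i, (lam i * Real.log (lam i) + (q i - lam i)) := by
        apply Finset.sum_le_sum
        intro i _
        have := step2 i
        linarith
    _ = ∑ i, lam i * Real.log (lam i) + ((∑ i, q i) - ∑ i, lam i) := by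
        rw [Finset.sum_add_distrib, Finset.sum_sub_distrib]
    _ = ∑ i, lam i * Real.log (lam i) := by rw [hqsum, hl1]; ring

lemma ent_num {ι : Type*} [Fintype ι] (lam mu : ι → ℝ) (Dm : ι → ι → ℝ)
    (hl0 : ∀ j, 0 ≤ lam j) (hD0 : ∀ i j, 0 ≤ Dm i j)
    (hrow : ∀ i, ∑ j, Dm i j = 1) (hcol : ∀ j, ∑ i, Dm i j = 1)
    (hmu : ∀ i, mu i = ∑ j, Dm i j * lam j) :
    ∑ i, mu i * Real.log (mu i) ≤ ∑ j, lam j * Real.log (lam j) := by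
  have key : ∀ i, ∑ j, Dm i j * Real.negMulLog (lam j) ≤ Real.negMulLog (mu i) := by
    intro i
    have h := (Real.concaveOn_negMulLog).le_map_sum (t := Finset.univ)
      (w := Dm i) (p := lam) (fun j _ => hD0 i j) (hrow i) (fun j _ => hl0 j)
    simp only [smul_eq_mul] at h
    rw [hmu i]
    exact h
  have h2 : ∑ j, Real.negMulLog (lam j) ≤ ∑ i, Real.negMulLog (mu i) := by
    calc ∑ j, Real.negMulLog (lam j)
        = ∑ j, (∑ i, Dm i j) * Real.negMulLog (lam j) := by
          exact Finset.sum_congr rfl fun j _ => by rw [hcol j, one_mul]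
      _ = ∑ j, ∑ i, Dm i j * Real.negMulLog (lam j) := by
          exact Finset.sum_congr rfl fun j _ => Finset.sum_mul _ _ _
      _ = ∑ i, ∑ j, Dm i j * Real.negMulLog (lam j) := Finset.sum_comm
      _ ≤ ∑ i, Real.negMulLog (mu i) := Finset.sum_le_sum fun i _ => key i
  have h3 : ∀ (x : ℝ), Real.negMulLog x = -(x * Real.log x) := by
    intro x
    rw [Real.negMulLog]
    ring
  simp only [h3] at h2
  rw [Finset.sum_neg_distrib, Finset.sum_neg_distrib] at h2
  linarith

lemma trace_conj_unitary {V B : Matrix n n ℂ} (hV : Vᴴ * V = 1) :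
    (V * B * Vᴴ).trace = B.trace := by
  rw [trace_mul_cycle, hV, Matrix.one_mul]

lemma trace_diag4 (a b : n → ℂ) (T : Matrix n n ℂ) :
    (diagonal a * T * diagonal b * Tᴴ).trace
      = ∑ i, ∑ j, a i * T i j * b j * (starRingEnd ℂ) (T i j) := by
  have hX : ∀ i j, (diagonal a * T * diagonal b) i j = a i * T i j * b j := by
    intro i j
    rw [mul_diagonal, diagonal_mul]
  calc (diagonal a * T * diagonal b * Tᴴ).trace
      = ∑ i, ∑ j, (diagonal a * T * diagonal b) i j * (starRingEnd ℂ) (T i j) := by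
        simp only [Matrix.trace, Matrix.diag, Matrix.mul_apply, Matrix.conjTranspose_apply,
          Complex.star_def]
    _ = ∑ i, ∑ j, a i * T i j * b j * (starRingEnd ℂ) (T i j) :=
        Finset.sum_congr rfl fun i _ => Finset.sum_congr rfl fun j _ => by rw [hX]

end QHelper
namespace QHelper
open Matrix Finset
open scoped ComplexOrder BigOperators

variable {n : Type*} [Fintype n] [DecidableEq n]

lemma trace_mul_matFun_self_re {A : Matrix n n ℂ} (hA : A.IsHermitian) (f : ℝ → ℝ) :
    ((A * matFun f A).trace).re = ∑ i, hA.eigenvalues i * f (hA.eigenvalues i) := by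
  rw [trace_mul_matFun_self hA f]
  rw [show (∑ i, ((hA.eigenvalues i * f (hA.eigenvalues i) : ℝ) : ℂ))
      = ((∑ i, hA.eigenvalues i * f (hA.eigenvalues i) : ℝ) : ℂ) by push_cast; rfl]
  exact Complex.ofReal_re _

lemma trace_pair_re {ρ σ : Matrix n n ℂ} (hρ1 : ρ.IsHermitian) (hσ1 : σ.IsHermitian) (g : ℝ → ℝ) :
    ((ρ * matFun g σ).trace).re
      = ∑ i, ∑ j, hρ1.eigenvalues i *
          (Complex.normSq (((eVec hρ1)ᴴ * eVec hσ1) i j) * g (hσ1.eigenvalues j)) := by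
  set V := eVec hρ1 with hV
  set W := eVec hσ1 with hW
  set T := Vᴴ * W with hT
  have hV1 : V * Vᴴ = 1 := eVec_mul_conjT hρ1
  have hV2 : Vᴴ * V = 1 := eVec_conjT_mul hρ1
  have hTH : Tᴴ = Wᴴ * V := by rw [hT, conjTranspose_mul, conjTranspose_conjTranspose]
  have hfact : ρ * matFun g σ
      = V * (diagonal (fun i => ((hρ1.eigenvalues i : ℝ) : ℂ)) * T *
          diagonal (fun j => ((g (hσ1.eigenvalues j) : ℝ) : ℂ)) * Tᴴ) * Vᴴ := by
    conv_lhs => rw [spec_decomp hρ1, matFun_eq hσ1]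
    rw [hT, hTH]
    have key : (V * diagonal (fun i => ((hρ1.eigenvalues i : ℝ) : ℂ)) * Vᴴ) *
        (W * diagonal (fun j => ((g (hσ1.eigenvalues j) : ℝ) : ℂ)) * Wᴴ) * (V * Vᴴ)
        = V * (diagonal (fun i => ((hρ1.eigenvalues i : ℝ) : ℂ)) * (Vᴴ * W) *
            diagonal (fun j => ((g (hσ1.eigenvalues j) : ℝ) : ℂ)) * (Wᴴ * V)) * Vᴴ := by
      noncomm_ring
    rw [hV1, Matrix.mul_one] at key
    exact key
  rw [hfact, trace_conj_unitary hV2, trace_diag4]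
  have hterm : ∀ i j, (hρ1.eigenvalues i : ℂ) * T i j * ((g (hσ1.eigenvalues j) : ℝ) : ℂ) *
      (starRingEnd ℂ) (T i j)
      = ((hρ1.eigenvalues i * (Complex.normSq (T i j) * g (hσ1.eigenvalues j)) : ℝ) : ℂ) := by
    intro i j
    rw [show (hρ1.eigenvalues i : ℂ) * T i j * ((g (hσ1.eigenvalues j) : ℝ) : ℂ) *
        (starRingEnd ℂ) (T i j)
        = (T i j * (starRingEnd ℂ) (T i j)) *
            ((hρ1.eigenvalues i : ℂ) * ((g (hσ1.eigenvalues j) : ℝ) : ℂ)) from by ring,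
      Complex.mul_conj]
    push_cast
    ring
  rw [Finset.sum_congr rfl fun i _ => Finset.sum_congr rfl fun j _ => hterm i j]
  rw [show (∑ i, ∑ j, ((hρ1.eigenvalues i *
      (Complex.normSq (T i j) * g (hσ1.eigenvalues j)) : ℝ) : ℂ))
      = ((∑ i, ∑ j, hρ1.eigenvalues i *
          (Complex.normSq (T i j) * g (hσ1.eigenvalues j)) : ℝ) : ℂ) by push_cast; rfl]
  exact Complex.ofReal_re _

lemma sum_eigen_eq_one {ρ : Matrix n n ℂ} (hρ1 : ρ.IsHermitian) (hρt : ρ.trace = 1) :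
    ∑ i, hρ1.eigenvalues i = 1 := by
  have h := (trace_eq_sum_eigen hρ1).symm.trans hρt
  exact_mod_cast h

lemma klein_mat {ρ σ : Matrix n n ℂ} (hρ : ρ.PosSemidef) (hσ : σ.PosSemidef)
    (hρt : ρ.trace = 1) (hσt : σ.trace = 1)
    (hker : ∀ x, σ *ᵥ x = 0 → ρ *ᵥ x = 0) :
    ((ρ * matLog σ).trace).re ≤ ((ρ * matLog ρ).trace).re := by
  classical
  have hρ1 := hρ.1
  have hσ1 := hσ.1
  set V := eVec hρ1 with hV
  set W := eVec hσ1 with hW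
  set lam := hρ1.eigenvalues with hlam
  set s := hσ1.eigenvalues with hs
  set T := Vᴴ * W with hT
  have hV1 : V * Vᴴ = 1 := eVec_mul_conjT hρ1
  have hV2 : Vᴴ * V = 1 := eVec_conjT_mul hρ1
  have hW1 : W * Wᴴ = 1 := eVec_mul_conjT hσ1
  have hW2 : Wᴴ * W = 1 := eVec_conjT_mul hσ1
  have hTH : Tᴴ = Wᴴ * V := by rw [hT, conjTranspose_mul, conjTranspose_conjTranspose]
  have hTT : T * Tᴴ = 1 := by
    rw [hT, hTH]
    calc Vᴴ * W * (Wᴴ * V) = Vᴴ * (W * Wᴴ) * V := by noncomm_ring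
      _ = 1 := by rw [hW1, Matrix.mul_one, hV2]
  have hTT2 : Tᴴ * T = 1 := by
    rw [hT, hTH]
    calc Wᴴ * V * (Vᴴ * W) = Wᴴ * (V * Vᴴ) * W := by noncomm_ring
      _ = 1 := by rw [hV1, Matrix.mul_one, hW2]
  set p : n → n → ℝ := fun i j => Complex.normSq (T i j) with hp
  have hprow : ∀ i, ∑ j, p i j = 1 := by
    intro i
    have h1 := Matrix.ext_iff.mpr hTT i i
    rw [Matrix.mul_apply, Matrix.one_apply_eq] at h1
    have h2 : ∑ j, ((p i j : ℝ) : ℂ) = 1 := by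
      rw [← h1]
      exact Finset.sum_congr rfl fun j _ => by
        rw [conjTranspose_apply, Complex.star_def, Complex.mul_conj]
    exact_mod_cast h2
  have hpcol : ∀ j, ∑ i, p i j = 1 := by
    intro j
    have h1 := Matrix.ext_iff.mpr hTT2 j j
    rw [Matrix.mul_apply, Matrix.one_apply_eq] at h1
    have h2 : ∑ i, ((p i j : ℝ) : ℂ) = 1 := by
      rw [← h1]
      exact Finset.sum_congr rfl fun i _ => by
        rw [conjTranspose_apply, Complex.star_def, mul_comm, Complex.mul_conj]
    exact_mod_cast h2
  have hspecρ : ρ = V * diagonal (fun k => ((lam k : ℝ) : ℂ)) * Vᴴ := spec_decomp hρ1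
  have hspecσ : σ = W * diagonal (fun k => ((s k : ℝ) : ℂ)) * Wᴴ := spec_decomp hσ1
  have hps : ∀ i j, lam i ≠ 0 → s j = 0 → p i j = 0 := by
    intro i j hli hsj
    have hσW : σ * W = W * diagonal (fun k => ((s k : ℝ) : ℂ)) := by
      rw [hspecσ]
      calc W * diagonal (fun k => ((s k : ℝ) : ℂ)) * Wᴴ * W
          = W * diagonal (fun k => ((s k : ℝ) : ℂ)) * (Wᴴ * W) := by noncomm_ring
        _ = W * diagonal (fun k => ((s k : ℝ) : ℂ)) := by rw [hW2, Matrix.mul_one]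
    have hwj : σ *ᵥ (fun a => W a j) = 0 := by
      funext a
      have h1 : (σ * W) a j = 0 := by
        rw [hσW, mul_diagonal, hsj]
        simp
      have h2 : (σ *ᵥ fun b => W b j) a = (σ * W) a j := by
        simp [Matrix.mulVec, Matrix.mul_apply, dotProduct]
      simp only [Pi.zero_apply]
      rw [h2, h1]
    have hrj : ρ *ᵥ (fun a => W a j) = 0 := hker _ hwj
    have hDT : diagonal (fun k => ((lam k : ℝ) : ℂ)) * T = Vᴴ * (ρ * W) := by
      rw [hspecρ, hT]
      calc diagonal (fun k => ((lam k : ℝ) : ℂ)) * (Vᴴ * W)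
          = (Vᴴ * V) * diagonal (fun k => ((lam k : ℝ) : ℂ)) * (Vᴴ * W) := by
            rw [hV2, Matrix.one_mul]
        _ = Vᴴ * (V * diagonal (fun k => ((lam k : ℝ) : ℂ)) * Vᴴ * W) := by noncomm_ring
    have hentry : (lam i : ℂ) * T i j = 0 := by
      have h2 := Matrix.ext_iff.mpr hDT i j
      rw [diagonal_mul] at h2
      rw [h2, Matrix.mul_apply]
      apply Finset.sum_eq_zero
      intro a _
      have h3 : (ρ * W) a j = 0 := by
        have h4 := congrFun hrj a
        simpa [Matrix.mulVec, Matrix.mul_apply, dotProduct] using h4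
      rw [h3, mul_zero]
    have hTij : T i j = 0 := by
      rcases mul_eq_zero.mp hentry with h | h
      · exact absurd (by exact_mod_cast h : lam i = 0) hli
      · exact h
    rw [hp]
    simp only [hTij, map_zero]
  have hRHS : ((ρ * matLog ρ).trace).re = ∑ i, lam i * Real.log (lam i) := by
    rw [matLog]
    exact trace_mul_matFun_self_re hρ1 Real.log
  have hLHS : ((ρ * matLog σ).trace).re = ∑ i, ∑ j, lam i * (p i j * Real.log (s j)) := by
    rw [matLog]
    exact trace_pair_re hρ1 hσ1 Real.log
  rw [hRHS, hLHS]
  exact klein_num lam s p (fun i => hρ.eigenvalues_nonneg i) (fun j => hσ.eigenvalues_nonneg j)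
    (fun i j => Complex.normSq_nonneg _) hprow hpcol
    (sum_eigen_eq_one hρ1 hρt) (sum_eigen_eq_one hσ1 hσt) hps

end QHelper
namespace QHelper
open Matrix Finset
open scoped ComplexOrder BigOperators

variable {n : Type*} [Fintype n] [DecidableEq n]

lemma quadform_sum {ι : Type*} (s : Finset ι) (f : ι → Matrix n n ℂ) (x : n → ℂ) :
    star x ⬝ᵥ (∑ j ∈ s, f j) *ᵥ x = ∑ j ∈ s, star x ⬝ᵥ (f j) *ᵥ x := by
  rw [← trace_mul_vecMulVec, Finset.sum_mul, trace_sum]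
  exact Finset.sum_congr rfl fun j _ => trace_mul_vecMulVec _ _

lemma quadform_smul (c : ℂ) (B : Matrix n n ℂ) (x : n → ℂ) :
    star x ⬝ᵥ (c • B) *ᵥ x = c * (star x ⬝ᵥ B *ᵥ x) := by
  rw [smul_mulVec, dotProduct_smul, smul_eq_mul]

lemma quadform_entry (B Wm : Matrix n n ℂ) (i : n) :
    (Wmᴴ * B * Wm) i i = star (fun a => Wm a i) ⬝ᵥ B *ᵥ (fun a => Wm a i) := by
  simp only [Matrix.mul_apply, Matrix.conjTranspose_apply, dotProduct, Matrix.mulVec,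
    Pi.star_apply, Finset.sum_mul, Finset.mul_sum]
  rw [Finset.sum_comm]
  exact Finset.sum_congr rfl fun a _ => Finset.sum_congr rfl fun b _ => by ring

lemma ent_mat {ψ : Matrix n n ℂ} (hψ : ψ.PosSemidef)
    (E : Matrix n n ℂ →ₗ[ℂ] Matrix n n ℂ)
    (hpos : ∀ Y, Y.PosSemidef → (E Y).PosSemidef)
    (htr : ∀ Y, (E Y).trace = Y.trace)
    (hone : E 1 = 1) :
    (((E ψ) * matLog (E ψ)).trace).re ≤ ((ψ * matLog ψ).trace).re := by
  classical
  have hρ' : (E ψ).PosSemidef := hpos ψ hψ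
  have hψ1 := hψ.1
  have hρ1 := hρ'.1
  set lam := hψ1.eigenvalues with hlam
  set mu := hρ1.eigenvalues with hmu
  set V := eVec hψ1 with hV
  set Wm := eVec hρ1 with hWm
  have hV1 : V * Vᴴ = 1 := eVec_mul_conjT hψ1
  have hV2 : Vᴴ * V = 1 := eVec_conjT_mul hψ1
  have hW1 : Wm * Wmᴴ = 1 := eVec_mul_conjT hρ1
  have hW2 : Wmᴴ * Wm = 1 := eVec_conjT_mul hρ1
  set R : n → Matrix n n ℂ := fun j => vecMulVec (fun a => V a j) (star fun a => V a j) with hR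
  have hRab : ∀ j a b, R j a b = V a j * (starRingEnd ℂ) (V b j) := by
    intro j a b
    rw [hR]
    simp [vecMulVec_apply, Complex.star_def]
  have hψdec : ψ = ∑ j, (lam j : ℂ) • R j := by
    have hspec : ψ = V * diagonal (fun k => ((lam k : ℝ) : ℂ)) * Vᴴ := spec_decomp hψ1
    rw [hspec]
    ext a b
    rw [Matrix.sum_apply]
    have h1 : (V * diagonal (fun k => ((lam k : ℝ) : ℂ)) * Vᴴ) a b
        = ∑ j, V a j * (lam j : ℂ) * (starRingEnd ℂ) (V b j) := by
      rw [Matrix.mul_apply]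
      exact Finset.sum_congr rfl fun j _ => by
        rw [mul_diagonal, Matrix.conjTranspose_apply, Complex.star_def]
    rw [h1]
    exact Finset.sum_congr rfl fun j _ => by
      rw [Matrix.smul_apply, hRab j a b, smul_eq_mul]
      ring
  have hRsum : ∑ j, R j = 1 := by
    ext a b
    rw [Matrix.sum_apply]
    have h1 : (1 : Matrix n n ℂ) a b = (V * Vᴴ) a b := by rw [hV1]
    rw [h1, Matrix.mul_apply]
    exact Finset.sum_congr rfl fun j _ => by
      rw [hRab j a b, Matrix.conjTranspose_apply, Complex.star_def]
  set w : n → n → ℂ := fun i => (fun a => Wm a i) with hw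
  set Dm : n → n → ℝ := fun i j => (star (w i) ⬝ᵥ (E (R j)) *ᵥ (w i)).re with hDm
  have hERpsd : ∀ j, (E (R j)).PosSemidef := fun j => hpos _ (psd_vecMulVec _)
  have hD0 : ∀ i j, 0 ≤ Dm i j := by
    intro i j
    have := (hERpsd j).dotProduct_mulVec_nonneg (w i)
    exact (Complex.le_def.mp this).1
  have hDim : ∀ i j, (star (w i) ⬝ᵥ (E (R j)) *ᵥ (w i)).im = 0 := by
    intro i j
    have := (hERpsd j).dotProduct_mulVec_nonneg (w i)
    exact ((Complex.le_def.mp this).2).symm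
  have hwnorm : ∀ i, star (w i) ⬝ᵥ (w i) = 1 := by
    intro i
    have h1 := Matrix.ext_iff.mpr hW2 i i
    rw [Matrix.mul_apply, Matrix.one_apply_eq] at h1
    rw [← h1]
    simp [w, dotProduct, Matrix.conjTranspose_apply]
  have hrow : ∀ i, ∑ j, Dm i j = 1 := by
    intro i
    have h1 : ∑ j, E (R j) = 1 := by
      rw [← map_sum, hRsum, hone]
    have h2 : ∑ j, star (w i) ⬝ᵥ (E (R j)) *ᵥ (w i) = 1 := by
      rw [← quadform_sum, h1, Matrix.one_mulVec, hwnorm i]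
    have h3 := congrArg Complex.re h2
    rw [Complex.re_sum] at h3
    simpa using h3
  have hcol : ∀ j, ∑ i, Dm i j = 1 := by
    intro j
    have h1 : ∑ i, star (w i) ⬝ᵥ (E (R j)) *ᵥ (w i) = (E (R j)).trace := by
      have h2 : ∀ i, star (w i) ⬝ᵥ (E (R j)) *ᵥ (w i) = (Wmᴴ * E (R j) * Wm) i i :=
        fun i => (quadform_entry _ _ i).symm
      rw [Finset.sum_congr rfl fun i _ => h2 i]
      have h3 : (Wmᴴ * E (R j) * Wm).trace = (E (R j)).trace := by
        have h4 := trace_conj_unitary (B := E (R j)) (V := Wmᴴ) (by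
          rw [conjTranspose_conjTranspose]; exact hW1)
        rwa [conjTranspose_conjTranspose] at h4
      rw [← h3]
      rfl
    have h5 : (E (R j)).trace = 1 := by
      rw [htr]
      have h6 : (R j).trace = star (fun a => V a j) ⬝ᵥ (fun a => V a j) := by
        simp only [Matrix.trace, Matrix.diag, dotProduct, Pi.star_apply, Complex.star_def]
        exact Finset.sum_congr rfl fun a _ => by rw [hRab j a a]; ring
      rw [h6]
      have h7 := Matrix.ext_iff.mpr hV2 j j
      rw [Matrix.mul_apply, Matrix.one_apply_eq] at h7
      rw [← h7]
      simp [dotProduct, Matrix.conjTranspose_apply]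
    have h8 := congrArg Complex.re (h1.trans h5)
    rw [Complex.re_sum] at h8
    simpa using h8
  have hmueq : ∀ i, mu i = ∑ j, Dm i j * lam j := by
    intro i
    have hwb : w i = ⇑(hρ1.eigenvectorBasis i) := by
      funext a
      exact hρ1.eigenvectorUnitary_apply a i
    have hmv : (E ψ) *ᵥ (w i) = (mu i : ℝ) • (w i) := by
      rw [hwb]
      exact hρ1.mulVec_eigenvectorBasis i
    have h1 : star (w i) ⬝ᵥ (E ψ) *ᵥ (w i) = (mu i : ℂ) := by
      rw [hmv]
      have : star (w i) ⬝ᵥ ((mu i : ℝ) • (w i)) = (mu i : ℂ) * (star (w i) ⬝ᵥ (w i)) := by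
        rw [show ((mu i : ℝ) • (w i)) = ((mu i : ℝ) : ℂ) • (w i) by
          funext a; simp [Complex.real_smul]]
        rw [dotProduct_smul, smul_eq_mul]
      rw [this, hwnorm i, mul_one]
    have h2 : E ψ = ∑ j, (lam j : ℂ) • E (R j) := by
      conv_lhs => rw [hψdec]
      rw [map_sum]
      exact Finset.sum_congr rfl fun j _ => map_smul E _ _
    have h3 : star (w i) ⬝ᵥ (E ψ) *ᵥ (w i)
        = ∑ j, (lam j : ℂ) * (star (w i) ⬝ᵥ (E (R j)) *ᵥ (w i)) := by
      rw [h2, quadform_sum]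
      exact Finset.sum_congr rfl fun j _ => quadform_smul _ _ _
    have h4 := congrArg Complex.re (h1.symm.trans h3)
    rw [Complex.re_sum] at h4
    simp only [Complex.ofReal_re] at h4
    rw [h4]
    exact Finset.sum_congr rfl fun j _ => by
      rw [Complex.re_ofReal_mul]
      exact mul_comm _ _
  rw [matLog, matLog, trace_mul_matFun_self_re hρ1 Real.log,
    trace_mul_matFun_self_re hψ1 Real.log]
  exact ent_num lam mu Dm (fun j => hψ.eigenvalues_nonneg j) hD0 hrow hcol hmueq

end QHelper
namespace QHelper
open Matrix Finset
open scoped ComplexOrder BigOperators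

variable {n : Type*} [Fintype n] [DecidableEq n]

lemma trace_mul_expand (A B : Matrix n n ℂ) : (A * B).trace = ∑ i, ∑ j, A i j * B j i := by
  simp [Matrix.trace, Matrix.diag, Matrix.mul_apply]

lemma trace_conj_eq (M : Matrix n n ℂ) : (starRingEnd ℂ) M.trace = (Mᴴ).trace := by
  simp [Matrix.trace, Matrix.diag, Matrix.conjTranspose_apply, map_sum, Complex.star_def]

/-- The trace-adjoint of a linear map on matrices. -/
noncomputable def adjE (E : Matrix n n ℂ →ₗ[ℂ] Matrix n n ℂ) (X : Matrix n n ℂ) :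
    Matrix n n ℂ :=
  Matrix.of fun i j => (X * E (single j i 1)).trace

lemma adjE_apply (E : Matrix n n ℂ →ₗ[ℂ] Matrix n n ℂ) (X : Matrix n n ℂ) (i j : n) :
    adjE E X i j = (X * E (single j i 1)).trace := rfl

lemma adjE_trace (E : Matrix n n ℂ →ₗ[ℂ] Matrix n n ℂ) (X Y : Matrix n n ℂ) :
    (adjE E X * Y).trace = (X * E Y).trace := by
  have hY : Y = ∑ a, ∑ b, Y a b • single a b 1 := by
    rw [show (∑ a, ∑ b, Y a b • single a b (1:ℂ))
        = ∑ a, ∑ b, single a b (Y a b) from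
      Finset.sum_congr rfl fun a _ => Finset.sum_congr rfl fun b _ => by
        rw [smul_single, smul_eq_mul, mul_one]]
    exact matrix_eq_sum_single Y
  have hRHS : (X * E Y).trace = ∑ a, ∑ b, Y a b * (X * E (single a b 1)).trace := by
    conv_lhs => rw [hY]
    rw [map_sum, Finset.mul_sum, trace_sum]
    refine Finset.sum_congr rfl fun a _ => ?_
    rw [map_sum, Finset.mul_sum, trace_sum]
    refine Finset.sum_congr rfl fun b _ => ?_
    rw [E.map_smul, Matrix.mul_smul, trace_smul, smul_eq_mul]
  rw [hRHS, trace_mul_expand]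
  rw [Finset.sum_comm]
  exact Finset.sum_congr rfl fun a _ => Finset.sum_congr rfl fun b _ => by
    rw [adjE_apply]
    ring

lemma herm_decomp {H : Matrix n n ℂ} (hH : H.IsHermitian) :
    ∃ A B : Matrix n n ℂ, A.PosSemidef ∧ B.PosSemidef ∧ H = A - B := by
  refine ⟨matFun (fun x => max x 0) H, matFun (fun x => max (-x) 0) H,
    matFun_psd hH (fun x => le_max_right _ _), matFun_psd hH (fun x => le_max_right _ _), ?_⟩
  rw [matFun_eq hH, matFun_eq hH]
  have h1 : eVec hH * diagonal (fun i => ((max (hH.eigenvalues i) 0 : ℝ) : ℂ)) * (eVec hH)ᴴ -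
      eVec hH * diagonal (fun i => ((max (-hH.eigenvalues i) 0 : ℝ) : ℂ)) * (eVec hH)ᴴ
      = eVec hH * (diagonal (fun i => ((max (hH.eigenvalues i) 0 : ℝ) : ℂ)) -
          diagonal (fun i => ((max (-hH.eigenvalues i) 0 : ℝ) : ℂ))) * (eVec hH)ᴴ := by
    rw [Matrix.mul_sub, Matrix.sub_mul]
  rw [h1, Matrix.diagonal_sub]
  have h2 : (fun i => ((max (hH.eigenvalues i) 0 : ℝ) : ℂ) - ((max (-hH.eigenvalues i) 0 : ℝ) : ℂ))
      = fun i => ((hH.eigenvalues i : ℝ) : ℂ) := by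
    funext i
    rw [← Complex.ofReal_sub]
    congr 1
    rcases le_total (hH.eigenvalues i) 0 with h | h
    · rw [max_eq_right h, max_eq_left (by linarith)]; ring
    · rw [max_eq_left h, max_eq_right (by linarith)]; ring
  rw [h2]
  exact spec_decomp hH

lemma E_herm (E : Matrix n n ℂ →ₗ[ℂ] Matrix n n ℂ)
    (hpos : ∀ Y : Matrix n n ℂ, Y.PosSemidef → (E Y).PosSemidef)
    {H : Matrix n n ℂ} (hH : H.IsHermitian) : (E H).IsHermitian := by
  obtain ⟨A, B, hA, hB, hAB⟩ := herm_decomp hH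
  rw [hAB, map_sub]
  exact ((hpos A hA).1).sub ((hpos B hB).1)

lemma E_star (E : Matrix n n ℂ →ₗ[ℂ] Matrix n n ℂ)
    (hpos : ∀ Y : Matrix n n ℂ, Y.PosSemidef → (E Y).PosSemidef)
    (Y : Matrix n n ℂ) : E (Yᴴ) = (E Y)ᴴ := by
  set H : Matrix n n ℂ := (2⁻¹ : ℂ) • (Y + Yᴴ) with hHdef
  set K : Matrix n n ℂ := (Complex.I * 2⁻¹) • (Yᴴ - Y) with hKdef
  have hH : H.IsHermitian := by
    rw [hHdef]
    unfold Matrix.IsHermitian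
    rw [conjTranspose_smul, conjTranspose_add, conjTranspose_conjTranspose]
    rw [show star (2⁻¹ : ℂ) = (2⁻¹ : ℂ) by simp]
    rw [add_comm]
  have hc : star (Complex.I * 2⁻¹) = -(Complex.I * 2⁻¹) := by
    rw [star_mul']
    rw [show star (2⁻¹ : ℂ) = (2⁻¹ : ℂ) by simp, Complex.star_def, Complex.conj_I]
    ring
  have hK : K.IsHermitian := by
    rw [hKdef]
    unfold Matrix.IsHermitian
    rw [conjTranspose_smul, conjTranspose_sub, conjTranspose_conjTranspose, hc]
    rw [neg_smul, ← smul_neg]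
    congr 1
    rw [neg_sub]
  have hY2 : Y = H + Complex.I • K := by
    rw [hHdef, hKdef, smul_smul]
    ext i j
    simp only [Matrix.add_apply, Matrix.sub_apply, Matrix.smul_apply, smul_eq_mul]
    linear_combination (2⁻¹ * (Y i j - Yᴴ i j)) * Complex.I_sq
  have hYc : Yᴴ = H + (-Complex.I) • K := by
    rw [hHdef, hKdef, smul_smul]
    ext i j
    simp only [Matrix.add_apply, Matrix.sub_apply, Matrix.smul_apply, smul_eq_mul]
    linear_combination (2⁻¹ * (Yᴴ i j - Y i j)) * Complex.I_sq
  have hEH : (E H).IsHermitian := E_herm E hpos hH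
  have hEK : (E K).IsHermitian := E_herm E hpos hK
  calc E (Yᴴ) = E H + (-Complex.I) • E K := by rw [hYc, map_add, E.map_smul, E.map_smul]
    _ = (E H)ᴴ + star Complex.I • (E K)ᴴ := by
        rw [hEH.eq, hEK.eq, show star Complex.I = -Complex.I from by
          rw [Complex.star_def, Complex.conj_I]]
    _ = (E H + Complex.I • E K)ᴴ := by rw [conjTranspose_add, conjTranspose_smul]
    _ = (E Y)ᴴ := by rw [← E.map_smul, ← map_add, ← hY2]

lemma adjE_herm (E : Matrix n n ℂ →ₗ[ℂ] Matrix n n ℂ)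
    (hpos : ∀ Y : Matrix n n ℂ, Y.PosSemidef → (E Y).PosSemidef)
    {X : Matrix n n ℂ} (hX : X.IsHermitian) : (adjE E X).IsHermitian := by
  unfold Matrix.IsHermitian
  ext i j
  rw [conjTranspose_apply, adjE_apply, adjE_apply, Complex.star_def, trace_conj_eq]
  rw [conjTranspose_mul, hX.eq]
  have h1 : (E (single i j 1))ᴴ = E (single j i 1) := by
    rw [← E_star E hpos]
    congr 1
    ext a b
    simp only [conjTranspose_apply, single, Matrix.of_apply]
    by_cases h : i = b ∧ j = a
    · rcases h with ⟨rfl, rfl⟩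
      simp
    · rw [if_neg h, if_neg (by tauto)]
      simp
  rw [h1, trace_mul_comm]

lemma adjE_psd (E : Matrix n n ℂ →ₗ[ℂ] Matrix n n ℂ)
    (hpos : ∀ Y : Matrix n n ℂ, Y.PosSemidef → (E Y).PosSemidef)
    {X : Matrix n n ℂ} (hX : X.PosSemidef) : (adjE E X).PosSemidef := by
  refine .of_dotProduct_mulVec_nonneg (adjE_herm E hpos hX.1) fun x => ?_
  rw [← trace_mul_vecMulVec, adjE_trace]
  exact trace_mul_psd_nonneg hX (hpos _ (psd_vecMulVec x))

lemma adjE_sum {ι : Type*} (E : Matrix n n ℂ →ₗ[ℂ] Matrix n n ℂ) (s : Finset ι)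
    (f : ι → Matrix n n ℂ) :
    adjE E (∑ c ∈ s, f c) = ∑ c ∈ s, adjE E (f c) := by
  ext i j
  rw [Matrix.sum_apply, adjE_apply]
  rw [Finset.sum_mul, trace_sum]
  exact Finset.sum_congr rfl fun c _ => rfl

lemma adjE_one (E : Matrix n n ℂ →ₗ[ℂ] Matrix n n ℂ)
    (htr : ∀ Y : Matrix n n ℂ, (E Y).trace = Y.trace) :
    adjE E 1 = 1 := by
  ext i j
  rw [adjE_apply, Matrix.one_mul, htr]
  have h1 : (single j i (1:ℂ)).trace = if j = i then 1 else 0 := by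
    simp only [Matrix.trace, Matrix.diag, single, Matrix.of_apply]
    by_cases h : j = i
    · subst h
      rw [Finset.sum_eq_single j]
      · simp
      · intro b _ hb
        rw [if_neg (by tauto)]
      · intro hj
        exact absurd (Finset.mem_univ j) hj
    · rw [if_neg h]
      apply Finset.sum_eq_zero
      intro b _
      rw [if_neg (by rintro ⟨rfl, rfl⟩; exact h rfl)]
  rw [h1, Matrix.one_apply]
  by_cases h : i = j
  · subst h; simp
  · rw [if_neg h, if_neg (fun hji => h hji.symm)]

lemma matFun_zero {A : Matrix n n ℂ} (hA : A.IsHermitian) {f : ℝ → ℝ}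
    (hf : ∀ x, f x = 0) : matFun f A = 0 := by
  rw [matFun_eq hA]
  simp only [hf]
  simp

/-- Spectral projection of `σ` onto the eigenvalue `c`. -/
noncomputable def projC (σ : Matrix n n ℂ) (c : ℝ) : Matrix n n ℂ :=
  matFun (fun x => if x = c then 1 else 0) σ

lemma projC_herm {σ : Matrix n n ℂ} (hσ1 : σ.IsHermitian) (c : ℝ) :
    (projC σ c).IsHermitian := matFun_herm hσ1 _

lemma projC_psd {σ : Matrix n n ℂ} (hσ1 : σ.IsHermitian) (c : ℝ) :
    (projC σ c).PosSemidef :=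
  matFun_psd hσ1 (fun x => by by_cases h : x = c <;> simp [h])

lemma projC_idem {σ : Matrix n n ℂ} (hσ1 : σ.IsHermitian) (c : ℝ) :
    projC σ c * projC σ c = projC σ c := by
  rw [projC, matFun_mul_matFun hσ1]
  have h1 : (fun x => (if x = c then (1:ℝ) else 0) * (if x = c then 1 else 0))
      = fun x => if x = c then (1:ℝ) else 0 := by
    funext x
    by_cases h : x = c <;> simp [h]
  rw [h1]

lemma projC_orth {σ : Matrix n n ℂ} (hσ1 : σ.IsHermitian) {c c' : ℝ} (hcc : c ≠ c') :
    projC σ c * projC σ c' = 0 := by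
  rw [projC, projC, matFun_mul_matFun hσ1]
  apply matFun_zero hσ1
  intro x
  by_cases h : x = c
  · subst h
    rw [if_neg hcc, if_pos rfl, one_mul]
  · rw [if_neg h, zero_mul]

lemma projC_sum_one {σ : Matrix n n ℂ} (hσ1 : σ.IsHermitian) :
    ∑ c ∈ Finset.image hσ1.eigenvalues Finset.univ, projC σ c = 1 := by
  have h1 := matFun_eq_sum_proj hσ1 (fun _ => 1)
  rw [matFun_one hσ1 (fun _ => rfl)] at h1
  have h2 : ∀ c : ℝ, (((1:ℝ)) : ℂ) • matFun (fun x => if x = c then 1 else 0) σ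
      = projC σ c := by
    intro c
    rw [show (((1:ℝ)) : ℂ) = (1:ℂ) by norm_num, one_smul]
    rfl
  rw [← Finset.sum_congr rfl fun c _ => h2 c]
  exact h1.symm

lemma matFun_eq_sum_projC {σ : Matrix n n ℂ} (hσ1 : σ.IsHermitian) (f : ℝ → ℝ) :
    matFun f σ = ∑ c ∈ Finset.image hσ1.eigenvalues Finset.univ, (f c : ℂ) • projC σ c :=
  matFun_eq_sum_proj hσ1 f

lemma adj_fix {σ : Matrix n n ℂ} (hσ1 : σ.IsHermitian)
    (E : Matrix n n ℂ →ₗ[ℂ] Matrix n n ℂ)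
    (hpos : ∀ Y : Matrix n n ℂ, Y.PosSemidef → (E Y).PosSemidef)
    (htr : ∀ Y : Matrix n n ℂ, (E Y).trace = Y.trace)
    (hfix : ∀ f : ℝ → ℝ, E (matFun f σ) = matFun f σ)
    (B : Matrix n n ℂ) (f : ℝ → ℝ) :
    ((E B) * matFun f σ).trace = (B * matFun f σ).trace := by
  classical
  have hfixP : ∀ c, E (projC σ c) = projC σ c := fun c => hfix _
  have hAherm : ∀ c, (adjE E (projC σ c)).IsHermitian :=
    fun c => adjE_herm E hpos (projC_herm hσ1 c)
  have key1 : ∀ c c', c ≠ c' → adjE E (projC σ c) * projC σ c' = 0 := by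
    intro c c' hcc
    apply mul_proj_eq_zero (adjE_psd E hpos (projC_psd hσ1 c)) (projC_herm hσ1 c')
      (projC_idem hσ1 c')
    rw [adjE_trace, hfixP, projC_orth hσ1 hcc, trace_zero]
  have hsumA : ∑ c ∈ Finset.image hσ1.eigenvalues Finset.univ, adjE E (projC σ c) = 1 := by
    rw [← adjE_sum, projC_sum_one hσ1, adjE_one E htr]
  have key2 : ∀ c ∈ Finset.image hσ1.eigenvalues Finset.univ,
      adjE E (projC σ c) = projC σ c := by
    intro c hc
    have h1 : projC σ c * adjE E (projC σ c) = projC σ c := by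
      have h2 : projC σ c * (∑ c' ∈ Finset.image hσ1.eigenvalues Finset.univ,
          adjE E (projC σ c')) = projC σ c := by
        rw [hsumA, Matrix.mul_one]
      rw [Finset.mul_sum] at h2
      have h7 : ∑ c' ∈ Finset.image hσ1.eigenvalues Finset.univ,
          projC σ c * adjE E (projC σ c')
          = projC σ c * adjE E (projC σ c) := by
        apply Finset.sum_eq_single c
        · intro c' _ hne
          have h3 : adjE E (projC σ c') * projC σ c = 0 := key1 c' c hne
          have h4 := congrArg conjTranspose h3
          rw [conjTranspose_mul, (hAherm c').eq, (projC_herm hσ1 c).eq,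
            conjTranspose_zero] at h4
          exact h4
        · intro hcS
          exact absurd hc hcS
      exact h7.symm.trans h2
    have h5 : projC σ c * adjE E (projC σ c) = adjE E (projC σ c) := by
      have h6 : (∑ c' ∈ Finset.image hσ1.eigenvalues Finset.univ, projC σ c') *
          adjE E (projC σ c) = adjE E (projC σ c) := by
        rw [projC_sum_one hσ1, Matrix.one_mul]
      rw [Finset.sum_mul] at h6
      have h7 : ∑ c' ∈ Finset.image hσ1.eigenvalues Finset.univ,
          projC σ c' * adjE E (projC σ c)
          = projC σ c * adjE E (projC σ c) := by
        apply Finset.sum_eq_single c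
        · intro c' _ hne
          have h3 : adjE E (projC σ c) * projC σ c' = 0 := key1 c c' (fun h => hne h.symm)
          have h4 := congrArg conjTranspose h3
          rw [conjTranspose_mul, (hAherm c).eq, (projC_herm hσ1 c').eq,
            conjTranspose_zero] at h4
          exact h4
        · intro hcS
          exact absurd hc hcS
      exact h7.symm.trans h6
    exact h5.symm.trans h1
  rw [matFun_eq_sum_projC hσ1 f, Finset.mul_sum, Finset.mul_sum, trace_sum, trace_sum]
  refine Finset.sum_congr rfl fun c hc => ?_
  rw [Matrix.mul_smul, Matrix.mul_smul, trace_smul, trace_smul]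
  congr 1
  calc (E B * projC σ c).trace = (projC σ c * E B).trace := trace_mul_comm _ _
    _ = (adjE E (projC σ c) * B).trace := (adjE_trace E (projC σ c) B).symm
    _ = (projC σ c * B).trace := by rw [key2 c hc]
    _ = (B * projC σ c).trace := trace_mul_comm _ _

end QHelper
namespace QHelper
open Matrix Finset
open scoped ComplexOrder BigOperators

variable {n : Type*} [Fintype n] [DecidableEq n]

lemma diag_mulVec (d : n → ℂ) (v : n → ℂ) : diagonal d *ᵥ v = fun i => d i * v i := by
  funext i
  simp [Matrix.mulVec, dotProduct, Matrix.diagonal_apply, ite_mul]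

lemma overlap_zero {ρ σ : Matrix n n ℂ} (hρ : ρ.PosSemidef) (hσ1 : σ.IsHermitian)
    (hker : ∀ x, σ *ᵥ x = 0 → ρ *ᵥ x = 0) (i j : n)
    (hli : hρ.1.eigenvalues i ≠ 0) (hsj : hσ1.eigenvalues j = 0) :
    ((eVec hρ.1)ᴴ * eVec hσ1) i j = 0 := by
  have hρ1 := hρ.1
  set V := eVec hρ1 with hV
  set W := eVec hσ1 with hW
  set lam := hρ1.eigenvalues with hlam
  set s := hσ1.eigenvalues with hs
  have hV2 : Vᴴ * V = 1 := eVec_conjT_mul hρ1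
  have hW2 : Wᴴ * W = 1 := eVec_conjT_mul hσ1
  have hspecρ : ρ = V * diagonal (fun k => ((lam k : ℝ) : ℂ)) * Vᴴ := spec_decomp hρ1
  have hspecσ : σ = W * diagonal (fun k => ((s k : ℝ) : ℂ)) * Wᴴ := spec_decomp hσ1
  have hσW : σ * W = W * diagonal (fun k => ((s k : ℝ) : ℂ)) := by
    rw [hspecσ]
    calc W * diagonal (fun k => ((s k : ℝ) : ℂ)) * Wᴴ * W
        = W * diagonal (fun k => ((s k : ℝ) : ℂ)) * (Wᴴ * W) := by noncomm_ring
      _ = W * diagonal (fun k => ((s k : ℝ) : ℂ)) := by rw [hW2, Matrix.mul_one]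
  have hwj : σ *ᵥ (fun a => W a j) = 0 := by
    funext a
    have h1 : (σ * W) a j = 0 := by
      rw [hσW, mul_diagonal, hsj]
      simp
    have h2 : (σ *ᵥ fun b => W b j) a = (σ * W) a j := by
      simp [Matrix.mulVec, Matrix.mul_apply, dotProduct]
    simp only [Pi.zero_apply]
    rw [h2, h1]
  have hrj : ρ *ᵥ (fun a => W a j) = 0 := hker _ hwj
  have hDT : diagonal (fun k => ((lam k : ℝ) : ℂ)) * (Vᴴ * W) = Vᴴ * (ρ * W) := by
    rw [hspecρ]
    calc diagonal (fun k => ((lam k : ℝ) : ℂ)) * (Vᴴ * W)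
        = (Vᴴ * V) * diagonal (fun k => ((lam k : ℝ) : ℂ)) * (Vᴴ * W) := by
          rw [hV2, Matrix.one_mul]
      _ = Vᴴ * (V * diagonal (fun k => ((lam k : ℝ) : ℂ)) * Vᴴ * W) := by noncomm_ring
  have hentry : (lam i : ℂ) * (Vᴴ * W) i j = 0 := by
    have h2 := Matrix.ext_iff.mpr hDT i j
    rw [diagonal_mul] at h2
    rw [h2, Matrix.mul_apply]
    apply Finset.sum_eq_zero
    intro a _
    have h3 : (ρ * W) a j = 0 := by
      have h4 := congrFun hrj a
      simpa [Matrix.mulVec, Matrix.mul_apply, dotProduct] using h4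
    rw [h3, mul_zero]
  rcases mul_eq_zero.mp hentry with h | h
  · exact absurd (by exact_mod_cast h : lam i = 0) hli
  · exact h

lemma proj0_mulVec {σ : Matrix n n ℂ} (hσ1 : σ.IsHermitian) (x : n → ℂ)
    (hx : σ *ᵥ x = 0) : projC σ 0 *ᵥ x = x := by
  set W := eVec hσ1 with hW
  set s := hσ1.eigenvalues with hs
  have hW1 : W * Wᴴ = 1 := eVec_mul_conjT hσ1
  have hW2 : Wᴴ * W = 1 := eVec_conjT_mul hσ1
  have hspec : σ = W * diagonal (fun k => ((s k : ℝ) : ℂ)) * Wᴴ := spec_decomp hσ1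
  set y := Wᴴ *ᵥ x with hy
  have hDy : diagonal (fun k => ((s k : ℝ) : ℂ)) *ᵥ y = 0 := by
    have h2 : (W * (diagonal (fun k => ((s k : ℝ) : ℂ)) * Wᴴ)) *ᵥ x = 0 := by
      have : W * (diagonal (fun k => ((s k : ℝ) : ℂ)) * Wᴴ) = σ := by
        rw [hspec, Matrix.mul_assoc]
      rw [this]
      exact hx
    have h3 : (Wᴴ * (W * (diagonal (fun k => ((s k : ℝ) : ℂ)) * Wᴴ))) *ᵥ x = 0 := by
      rw [← mulVec_mulVec, h2, Matrix.mulVec_zero]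
    have h4 : Wᴴ * (W * (diagonal (fun k => ((s k : ℝ) : ℂ)) * Wᴴ))
        = diagonal (fun k => ((s k : ℝ) : ℂ)) * Wᴴ := by
      rw [← Matrix.mul_assoc, hW2, Matrix.one_mul]
    rw [h4, ← mulVec_mulVec] at h3
    rw [hy]
    exact h3
  have hyi : ∀ i, (s i : ℂ) * y i = 0 := by
    intro i
    have := congrFun hDy i
    rw [diag_mulVec] at this
    exact this
  have hD0y : diagonal (fun k => (((if s k = 0 then 1 else 0 : ℝ)) : ℂ)) *ᵥ y = y := by
    rw [diag_mulVec]
    funext i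
    by_cases h : s i = 0
    · simp [h]
    · have h2 : y i = 0 := by
        have h3 := hyi i
        rcases mul_eq_zero.mp h3 with h4 | h4
        · exact absurd (by exact_mod_cast h4 : s i = 0) h
        · exact h4
      simp [h, h2]
  have hPm : projC σ 0 = W * diagonal (fun k => (((if s k = 0 then 1 else 0 : ℝ)) : ℂ)) * Wᴴ :=
    matFun_eq hσ1 _
  rw [hPm, ← mulVec_mulVec, ← mulVec_mulVec, ← hy, hD0y]
  rw [mulVec_mulVec, hW1, Matrix.one_mulVec]

section TwirlFacts

variable {G : Type*} [Group G] [Fintype G] {U : G → Matrix n n ℂ}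

lemma card_G_ne_zero (G : Type*) [Group G] [Fintype G] : (Fintype.card G : ℂ) ≠ 0 := by
  have : Nonempty G := ⟨1⟩
  exact_mod_cast Fintype.card_ne_zero

lemma twirl_psd (hU : ∀ g, U g ∈ Matrix.unitaryGroup n ℂ) {ψ : Matrix n n ℂ}
    (hψ : ψ.PosSemidef) : (twirl U ψ).PosSemidef := by
  rw [twirl]
  have h1 : ((Fintype.card G : ℂ))⁻¹ = (((Fintype.card G : ℝ)⁻¹ : ℝ) : ℂ) := by push_cast; rfl
  rw [h1]
  apply psd_smul_real _ (by positivity)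
  exact psd_sum _ _ fun g _ => hψ.mul_mul_conjTranspose_same (U g)

lemma twirl_trace (hU : ∀ g, U g ∈ Matrix.unitaryGroup n ℂ) (X : Matrix n n ℂ) :
    (twirl U X).trace = X.trace := by
  rw [twirl, trace_smul, trace_sum]
  have h1 : ∀ g : G, (U g * X * (U g)ᴴ).trace = X.trace := by
    intro g
    rw [trace_mul_cycle]
    have h2 : (U g)ᴴ * U g = 1 := by
      have := Matrix.mem_unitaryGroup_iff'.mp (hU g)
      rwa [Matrix.star_eq_conjTranspose] at this
    rw [h2, Matrix.one_mul]
  rw [Finset.sum_congr rfl fun g _ => h1 g, Finset.sum_const, Finset.card_univ]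
  rw [nsmul_eq_mul, smul_eq_mul, ← mul_assoc, inv_mul_cancel₀ (card_G_ne_zero G),
    one_mul]

lemma twirl_of_commute (U : G → Matrix n n ℂ)
    (hU : ∀ g, U g ∈ Matrix.unitaryGroup n ℂ) {X : Matrix n n ℂ}
    (hX : ∀ g, U g * X = X * U g) : twirl U X = X := by
  rw [twirl]
  have h1 : ∀ g : G, U g * X * (U g)ᴴ = X := by
    intro g
    rw [hX g]
    have h2 : U g * (U g)ᴴ = 1 := by
      have := Matrix.mem_unitaryGroup_iff.mp (hU g)
      rwa [Matrix.star_eq_conjTranspose] at this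
    rw [Matrix.mul_assoc, h2, Matrix.mul_one]
  rw [Finset.sum_congr rfl fun g _ => h1 g, Finset.sum_const, Finset.card_univ]
  rw [← Nat.cast_smul_eq_nsmul ℂ, smul_smul,
    inv_mul_cancel₀ (card_G_ne_zero G), one_smul]

lemma twirl_conj_inv (U : G → Matrix n n ℂ)
    (hU : ∀ g, U g ∈ Matrix.unitaryGroup n ℂ)
    (hUmul : ∀ g g', U (g * g') = U g * U g') (X : Matrix n n ℂ) (g : G) :
    U g * twirl U X * (U g)ᴴ = twirl U X := by
  rw [twirl]
  rw [Matrix.mul_smul, Matrix.smul_mul]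
  congr 1
  rw [Finset.mul_sum, Finset.sum_mul]
  have h1 : ∀ g' : G, U g * (U g' * X * (U g')ᴴ) * (U g)ᴴ = U (g * g') * X * (U (g * g'))ᴴ := by
    intro g'
    rw [hUmul g g', conjTranspose_mul]
    noncomm_ring
  rw [Finset.sum_congr rfl fun g' _ => h1 g']
  exact Fintype.sum_equiv (Equiv.mulLeft g) _ _ fun g' => rfl

lemma commute_matFun {σ : Matrix n n ℂ} (hσ1 : σ.IsHermitian)
    (W : Matrix n n ℂ) (hW1 : W * Wᴴ = 1) (hW2 : Wᴴ * W = 1)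
    (hinv : W * σ * Wᴴ = σ) (f : ℝ → ℝ) :
    W * matFun f σ = matFun f σ * W := by
  set V := eVec hσ1 with hV
  have hV1 : V * Vᴴ = 1 := eVec_mul_conjT hσ1
  have hV2 : Vᴴ * V = 1 := eVec_conjT_mul hσ1
  have hdec : σ = (W * V) * diagonal (fun i => ((hσ1.eigenvalues i : ℝ) : ℂ)) * (W * V)ᴴ := by
    rw [conjTranspose_mul]
    calc σ = W * σ * Wᴴ := hinv.symm
      _ = W * (V * diagonal (fun i => ((hσ1.eigenvalues i : ℝ) : ℂ)) * Vᴴ) * Wᴴ := by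
          rw [← spec_decomp hσ1]
      _ = W * V * diagonal (fun i => ((hσ1.eigenvalues i : ℝ) : ℂ)) * (Vᴴ * Wᴴ) := by
          noncomm_ring
  have hWV1 : (W * V) * (W * V)ᴴ = 1 := by
    rw [conjTranspose_mul]
    calc W * V * (Vᴴ * Wᴴ) = W * (V * Vᴴ) * Wᴴ := by noncomm_ring
      _ = 1 := by rw [hV1, Matrix.mul_one, hW1]
  have hWV2 : (W * V)ᴴ * (W * V) = 1 := by
    rw [conjTranspose_mul]
    calc Vᴴ * Wᴴ * (W * V) = Vᴴ * (Wᴴ * W) * V := by noncomm_ring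
      _ = 1 := by rw [hW2, Matrix.mul_one, hV2]
  have h1 : matFun f σ = (W * V) * diagonal (fun i => ((f (hσ1.eigenvalues i) : ℝ) : ℂ))
      * (W * V)ᴴ := spec_eq f hWV1 hWV2 hdec
  have h2 : matFun f σ = V * diagonal (fun i => ((f (hσ1.eigenvalues i) : ℝ) : ℂ)) * Vᴴ :=
    matFun_eq hσ1 f
  have h3 : W * matFun f σ * Wᴴ = matFun f σ := by
    conv_rhs => rw [h1]
    rw [h2, conjTranspose_mul]
    noncomm_ring
  calc W * matFun f σ = W * matFun f σ * (Wᴴ * W) := by rw [hW2, Matrix.mul_one]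
    _ = (W * matFun f σ * Wᴴ) * W := by noncomm_ring
    _ = matFun f σ * W := by rw [h3]

lemma twirl_ker (U : G → Matrix n n ℂ)
    (hU : ∀ g, U g ∈ Matrix.unitaryGroup n ℂ) (hU1 : U 1 = 1)
    {ψ : Matrix n n ℂ} (hψ : ψ.PosSemidef) (x : n → ℂ)
    (hx : (twirl U ψ) *ᵥ x = 0) : ψ *ᵥ x = 0 := by
  have h0 : star x ⬝ᵥ (twirl U ψ) *ᵥ x = 0 := by
    rw [hx, dotProduct_zero]
  rw [twirl, quadform_smul] at h0
  have h1 : star x ⬝ᵥ (∑ g : G, U g * ψ * (U g)ᴴ) *ᵥ x = 0 := by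
    rcases mul_eq_zero.mp h0 with h | h
    · exact absurd h (inv_ne_zero (card_G_ne_zero G))
    · exact h
  rw [quadform_sum] at h1
  have h2 : ∀ g ∈ Finset.univ, (0:ℂ) ≤ star x ⬝ᵥ (U g * ψ * (U g)ᴴ) *ᵥ x :=
    fun g _ => (hψ.mul_mul_conjTranspose_same (U g)).dotProduct_mulVec_nonneg x
  have h3 := (Finset.sum_eq_zero_iff_of_nonneg h2).mp h1 1 (Finset.mem_univ 1)
  rw [hU1] at h3
  have h4 : (1 : Matrix n n ℂ) * ψ * (1 : Matrix n n ℂ)ᴴ = ψ := by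
    simp
  rw [h4] at h3
  exact (hψ.dotProduct_mulVec_zero_iff x).mp h3

end TwirlFacts

end QHelper

/-- The mutual-information chain of inequalities in the weak-converse proof of
Theorem 1: the average relative entropy of the encoded states to their average
is bounded by `D(ψ‖𝒢(ψ))`. -/
theorem avg_relEnt_le_relEnt_twirl
    {G : Type*} [Group G] [Fintype G] {d : ℕ}
    (U : G → Matrix (Fin d) (Fin d) ℂ)
    (hU : ∀ g, U g ∈ Matrix.unitaryGroup (Fin d) ℂ)
    (hU1 : U 1 = 1) (hUmul : ∀ g g', U (g * g') = U g * U g')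
    (ψ : Matrix (Fin d) (Fin d) ℂ) (hψ : ψ.PosSemidef) (hψtr : ψ.trace = 1)
    (M : ℕ) (hM : 1 ≤ M)
    (E : Fin M → Matrix (Fin d) (Fin d) ℂ →ₗ[ℂ] Matrix (Fin d) (Fin d) ℂ)
    (hEpos : ∀ m (Y : Matrix (Fin d) (Fin d) ℂ), Y.PosSemidef → (E m Y).PosSemidef)
    (hEtr : ∀ m (Y : Matrix (Fin d) (Fin d) ℂ), (E m Y).trace = Y.trace)
    (hEtwirl : ∀ m (Y : Matrix (Fin d) (Fin d) ℂ), E m (twirl U Y) = twirl U Y) :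
    (M : ℝ)⁻¹ * ∑ m, relEnt (E m ψ) ((M : ℂ)⁻¹ • ∑ m', E m' ψ)
      ≤ relEnt ψ (twirl U ψ) := by
  classical
  open QHelper in
  set σ : Matrix (Fin d) (Fin d) ℂ := twirl U ψ with hσdef
  have hσpsd : σ.PosSemidef := QHelper.twirl_psd hU hψ
  have hσ1 : σ.IsHermitian := hσpsd.1
  have hσtr : σ.trace = 1 := by rw [hσdef, QHelper.twirl_trace hU, hψtr]
  have hfix : ∀ m (f : ℝ → ℝ), E m (matFun f σ) = matFun f σ := by
    intro m f
    have hcomm : ∀ g, U g * matFun f σ = matFun f σ * U g := by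
      intro g
      refine QHelper.commute_matFun hσ1 (U g) ?_ ?_ ?_ f
      · have := Matrix.mem_unitaryGroup_iff.mp (hU g)
        rwa [Matrix.star_eq_conjTranspose] at this
      · have := Matrix.mem_unitaryGroup_iff'.mp (hU g)
        rwa [Matrix.star_eq_conjTranspose] at this
      · rw [hσdef]
        exact QHelper.twirl_conj_inv U hU hUmul ψ g
    calc E m (matFun f σ) = E m (twirl U (matFun f σ)) := by
          rw [QHelper.twirl_of_commute U hU hcomm]
      _ = twirl U (matFun f σ) := hEtwirl m _
      _ = matFun f σ := QHelper.twirl_of_commute U hU hcomm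
  have hone : ∀ m, E m (1 : Matrix (Fin d) (Fin d) ℂ) = 1 := by
    intro m
    have hcomm : ∀ g, U g * (1 : Matrix (Fin d) (Fin d) ℂ) = 1 * U g := fun g => by
      rw [Matrix.mul_one, Matrix.one_mul]
    calc E m 1 = E m (twirl U 1) := by rw [QHelper.twirl_of_commute U hU hcomm]
      _ = twirl U 1 := hEtwirl m _
      _ = 1 := QHelper.twirl_of_commute U hU hcomm
  have hF5 : ∀ m (f : ℝ → ℝ), ((E m ψ) * matFun f σ).trace = (ψ * matFun f σ).trace :=
    fun m f => QHelper.adj_fix hσ1 (E m) (hEpos m) (hEtr m) (fun f' => hfix m f') ψ f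
  set ρavg : Matrix (Fin d) (Fin d) ℂ := (M : ℂ)⁻¹ • ∑ m', E m' ψ with hρdef
  have hMc : (M : ℂ) ≠ 0 := Nat.cast_ne_zero.mpr (Nat.one_le_iff_ne_zero.mp hM)
  have hMr : (0 : ℝ) < (M : ℝ) := by exact_mod_cast Nat.lt_of_lt_of_le Nat.zero_lt_one hM
  have hρpsd : ρavg.PosSemidef := by
    rw [hρdef]
    rw [show ((M : ℂ))⁻¹ = (((M : ℝ)⁻¹ : ℝ) : ℂ) by push_cast; rfl]
    apply QHelper.psd_smul_real _ (by positivity)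
    exact QHelper.psd_sum _ _ fun m _ => hEpos m ψ hψ
  have hρtr : ρavg.trace = 1 := by
    rw [hρdef, trace_smul, trace_sum]
    rw [Finset.sum_congr rfl fun m _ => (hEtr m ψ).trans hψtr]
    rw [Finset.sum_const, Finset.card_univ, Fintype.card_fin, nsmul_eq_mul, mul_one,
      smul_eq_mul, inv_mul_cancel₀ hMc]
  have hsumE : ∑ m, E m ψ = (M : ℂ) • ρavg := by
    rw [hρdef, smul_smul, mul_inv_cancel₀ hMc, one_smul]
  have hkerψ : ∀ y, σ *ᵥ y = 0 → ψ *ᵥ y = 0 := by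
    intro y hy
    exact QHelper.twirl_ker U hU hU1 hψ y hy
  have hker : ∀ x, σ *ᵥ x = 0 → ρavg *ᵥ x = 0 := by
    intro x hx
    have hPx : QHelper.projC σ 0 *ᵥ x = x := QHelper.proj0_mulVec hσ1 x hx
    have hre : ((ψ * QHelper.projC σ 0).trace).re = 0 := by
      simp only [QHelper.projC]
      rw [QHelper.trace_pair_re hψ.1 hσ1 _]
      apply Finset.sum_eq_zero
      intro i _
      apply Finset.sum_eq_zero
      intro j _
      by_cases hli : hψ.1.eigenvalues i = 0
      · rw [hli, zero_mul]
      · by_cases hsj : hσ1.eigenvalues j = 0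
        · rw [QHelper.overlap_zero hψ hσ1 hkerψ i j hli hsj]
          simp
        · rw [if_neg hsj, mul_zero, mul_zero]
    have hnn : (0 : ℂ) ≤ (ψ * QHelper.projC σ 0).trace :=
      QHelper.trace_mul_psd_nonneg hψ (QHelper.projC_psd hσ1 0)
    have htr0 : (ψ * QHelper.projC σ 0).trace = 0 := by
      apply Complex.ext
      · rw [hre, Complex.zero_re]
      · rw [Complex.zero_im, ← (Complex.le_def.mp hnn).2, Complex.zero_im]
    have htrρ : (ρavg * QHelper.projC σ 0).trace = 0 := by
      rw [hρdef, Matrix.smul_mul, trace_smul, Finset.sum_mul, trace_sum]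
      have hper : ∀ m : Fin M, (E m ψ * QHelper.projC σ 0).trace
          = (ψ * QHelper.projC σ 0).trace :=
        fun m => hF5 m (fun x => if x = 0 then 1 else 0)
      rw [Finset.sum_congr rfl fun m _ => (hper m).trans htr0]
      simp
    have hρP : ρavg * QHelper.projC σ 0 = 0 :=
      QHelper.mul_proj_eq_zero hρpsd (QHelper.projC_herm hσ1 0) (QHelper.projC_idem hσ1 0) htrρ
    rw [← hPx, mulVec_mulVec, hρP, Matrix.zero_mulVec]
  have hklein : ((ρavg * matLog σ).trace).re ≤ ((ρavg * matLog ρavg).trace).re :=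
    QHelper.klein_mat hρpsd hσpsd hρtr hσtr hker
  have htrρL : (ρavg * matLog σ).trace = (ψ * matLog σ).trace := by
    rw [hρdef, Matrix.smul_mul, trace_smul, Finset.sum_mul, trace_sum, matLog]
    rw [Finset.sum_congr rfl fun m _ => hF5 m Real.log]
    rw [Finset.sum_const, Finset.card_univ, Fintype.card_fin, nsmul_eq_mul, smul_eq_mul,
      ← mul_assoc, inv_mul_cancel₀ hMc, one_mul]
  have hF6 : ∀ m, (((E m ψ) * matLog (E m ψ)).trace).re ≤ ((ψ * matLog ψ).trace).re :=
    fun m => QHelper.ent_mat hψ (E m) (hEpos m) (hEtr m) (hone m)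
  have hexp : ∀ a b : Matrix (Fin d) (Fin d) ℂ,
      relEnt a b = ((a * matLog a).trace).re - ((a * matLog b).trace).re := by
    intro a b
    rw [relEnt, Matrix.mul_sub, trace_sub, Complex.sub_re]
  have hsum2 : ∑ m, relEnt (E m ψ) ρavg
      = (∑ m, (((E m ψ) * matLog (E m ψ)).trace).re)
        - (M : ℝ) * ((ρavg * matLog ρavg).trace).re := by
    rw [Finset.sum_congr rfl fun m _ => hexp (E m ψ) ρavg, Finset.sum_sub_distrib]
    congr 1
    have h1 : ∑ m, (((E m ψ) * matLog ρavg).trace).re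
        = ((∑ m, ((E m ψ) * matLog ρavg).trace)).re := (Complex.re_sum _ _).symm
    rw [h1, ← trace_sum, ← Finset.sum_mul, hsumE, Matrix.smul_mul, trace_smul, smul_eq_mul]
    rw [show ((M : ℕ) : ℂ) = (((M : ℝ)) : ℂ) by push_cast; rfl, Complex.re_ofReal_mul]
  rw [hsum2, hexp ψ σ]
  have hb1 : ∑ m, (((E m ψ) * matLog (E m ψ)).trace).re
      ≤ (M : ℝ) * ((ψ * matLog ψ).trace).re := by
    calc ∑ m, (((E m ψ) * matLog (E m ψ)).trace).re
        ≤ ∑ _m : Fin M, ((ψ * matLog ψ).trace).re := Finset.sum_le_sum fun m _ => hF6 m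
      _ = (M : ℝ) * ((ψ * matLog ψ).trace).re := by
          rw [Finset.sum_const, Finset.card_univ, Fintype.card_fin, nsmul_eq_mul]
  have hb2 : ((ψ * matLog σ).trace).re ≤ ((ρavg * matLog ρavg).trace).re := by
    have h := hklein
    rw [htrρL] at h
    exact h
  calc (M : ℝ)⁻¹ * ((∑ m, (((E m ψ) * matLog (E m ψ)).trace).re)
        - (M : ℝ) * ((ρavg * matLog ρavg).trace).re)
      ≤ (M : ℝ)⁻¹ * ((M : ℝ) * ((ψ * matLog ψ).trace).re
        - (M : ℝ) * ((ψ * matLog σ).trace).re) := by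
        apply mul_le_mul_of_nonneg_left _ (inv_nonneg.mpr (le_of_lt hMr))
        have := mul_le_mul_of_nonneg_left hb2 (le_of_lt hMr)
        linarith
    _ = ((ψ * matLog ψ).trace).re - ((ψ * matLog σ).trace).re := by
        field_simp
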